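/- Let φ ∈ 𝓘 be convex (φ strictly increasing, φ(0)=0, φ(1)=1, φ(∞)=∞), p ∈ (1,n), and Ω, Ω₁ bounded convex domains containing the origin. Then the homogeneous Orlicz L_φ mixed p-capacity satisfies Ĉ_{p,φ}(Ω, Ω₁) ≥ (C_p(Ω₁)/C_p(Ω))^{1/(n-p)}. -/

import Mathlib

open MeasureTheory Set Filter

/-- The support function `h_K(u) = sup_{x ∈ K} ⟨x, u⟩` of a set `K ⊆ ℝⁿ`. -/
noncomputable def suppFn (n : ℕ) (K : Set (EuclideanSpace ℝ (Fin n)))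
    (u : EuclideanSpace ℝ (Fin n)) : ℝ :=
  sSup ((fun x => (inner ℝ x u : ℝ)) '' K)

/-- A bounded open convex domain containing the origin. -/
def IsConvexDomain (n : ℕ) (Ω : Set (EuclideanSpace ℝ (Fin n))) : Prop :=
  IsOpen Ω ∧ Convex ℝ Ω ∧ Bornology.IsBounded Ω ∧ (0 : EuclideanSpace ℝ (Fin n)) ∈ Ω

/-- Supporting line at `1` for a convex `φ` with `φ 0 = 0`, `φ 1 = 1`. -/
lemma support_line_at_one (φ : ℝ → ℝ) (hφ0 : φ 0 = 0) (hφ1 : φ 1 = 1)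
    (hφconv : ConvexOn ℝ (Ici 0) φ) :
    ∃ c : ℝ, 1 ≤ c ∧ ∀ t : ℝ, 0 ≤ t → 1 + c * (t - 1) ≤ φ t := by
  set S : Set ℝ := (fun t => (1 - φ t) / (1 - t)) '' Ico (0:ℝ) 1 with hS
  have hne : S.Nonempty := ⟨(1 - φ 0) / (1 - 0), ⟨0, ⟨le_refl _, one_pos⟩, rfl⟩⟩
  have hslope : ∀ s ∈ Ico (0:ℝ) 1, ∀ t : ℝ, 1 < t →
      (1 - φ s) / (1 - s) ≤ (φ t - 1) / (t - 1) := by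
    intro s hs t ht
    have := hφconv.slope_mono_adjacent (by simpa using hs.1)
      (le_of_lt (by linarith) : (0:ℝ) ≤ t) hs.2 ht
    rw [hφ1] at this
    exact this
  have hbdd : BddAbove S := by
    refine ⟨(φ 2 - 1) / (2 - 1), ?_⟩
    rintro x ⟨s, hs, rfl⟩
    exact hslope s hs 2 one_lt_two
  set c := sSup S with hc
  refine ⟨c, ?_, ?_⟩
  · have : (1 - φ 0) / (1 - 0) ∈ S := ⟨0, ⟨le_refl _, one_pos⟩, rfl⟩
    have := le_csSup hbdd this
    simpa [hφ0] using this
  · intro t ht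
    rcases lt_trichotomy t 1 with h1 | h1 | h1
    · have hmem : (1 - φ t) / (1 - t) ∈ S := ⟨t, ⟨ht, h1⟩, rfl⟩
      have hle := le_csSup hbdd hmem
      have h1t : (0:ℝ) < 1 - t := by linarith
      rw [div_le_iff₀ h1t] at hle
      nlinarith
    · simp [h1, hφ1]
    · have hle : c ≤ (φ t - 1) / (t - 1) := by
        apply csSup_le hne
        rintro x ⟨s, hs, rfl⟩
        exact hslope s hs t h1
      have h1t : (0:ℝ) < t - 1 := by linarith
      rw [le_div_iff₀ h1t] at hle
      nlinarith

lemma suppFn_bddAbove (n : ℕ) (K : Set (EuclideanSpace ℝ (Fin n)))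
    (hK : Bornology.IsBounded K) (u : EuclideanSpace ℝ (Fin n)) (hu : ‖u‖ = 1) :
    BddAbove ((fun x => (inner ℝ x u : ℝ)) '' K) := by
  obtain ⟨M, hM⟩ := hK.exists_norm_le
  refine ⟨M, ?_⟩
  rintro y ⟨x, hx, rfl⟩
  calc (inner ℝ x u : ℝ) ≤ ‖x‖ * ‖u‖ := real_inner_le_norm x u
    _ = ‖x‖ := by rw [hu, mul_one]
    _ ≤ M := hM x hx

lemma suppFn_nonneg (n : ℕ) (K : Set (EuclideanSpace ℝ (Fin n)))
    (hK : Bornology.IsBounded K) (h0 : (0 : EuclideanSpace ℝ (Fin n)) ∈ K)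
    (u : EuclideanSpace ℝ (Fin n)) (hu : ‖u‖ = 1) : 0 ≤ suppFn n K u := by
  have : (inner ℝ (0 : EuclideanSpace ℝ (Fin n)) u : ℝ) ∈ (fun x => (inner ℝ x u : ℝ)) '' K :=
    ⟨0, h0, rfl⟩
  have := le_csSup (suppFn_bddAbove n K hK u hu) this
  simpa [suppFn] using this

lemma suppFn_pos (n : ℕ) (Ω : Set (EuclideanSpace ℝ (Fin n))) (hΩ : IsConvexDomain n Ω)
    (u : EuclideanSpace ℝ (Fin n)) (hu : ‖u‖ = 1) : 0 < suppFn n Ω u := by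
  obtain ⟨hopen, _, hbdd, h0⟩ := hΩ
  obtain ⟨r, hr, hball⟩ := Metric.isOpen_iff.1 hopen 0 h0
  have hx : (r/2) • u ∈ Ω := by
    apply hball
    simp only [Metric.mem_ball, dist_zero_right, norm_smul, Real.norm_eq_abs, hu, mul_one]
    rw [abs_of_pos (by linarith)]
    linarith
  have hmem : (inner ℝ ((r/2) • u) u : ℝ) ∈ (fun x => (inner ℝ x u : ℝ)) '' Ω := ⟨_, hx, rfl⟩
  have hle := le_csSup (suppFn_bddAbove n Ω hbdd u hu) hmem
  have hiu : (inner ℝ u u : ℝ) = 1 := by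
    rw [real_inner_self_eq_norm_sq, hu]; norm_num
  rw [real_inner_smul_left, hiu, mul_one] at hle
  calc (0:ℝ) < r/2 := by linarith
    _ ≤ suppFn n Ω u := hle

/-- if `φ ∈ 𝓘` is convex, then the homogeneous Orlicz `L_φ` mixed `p`-capacity
(the unique `η > 0` with `(p−1)/(n−p) ∫ φ(h_{Ω₁}/(η h_Ω)) h_Ω dμ_p(Ω,·) = C_p(Ω)`) satisfies
`Ĉ_{p,φ}(Ω,Ω₁) ≥ (C_p(Ω₁)/C_p(Ω))^{1/(n-p)}`.  The `p`-capacities `Cp, Cp1` are linked to the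
`p`-capacitary measure `μp` of `Ω` by the Poincaré formula and the `p`-capacitary Minkowski
inequality. -/
theorem homogeneous_orlicz_minkowski (n : ℕ) (p : ℝ) (hp : 1 < p) (hpn : p < n)
    (φ : ℝ → ℝ) (hφc : ContinuousOn φ (Ici 0)) (hφm : StrictMonoOn φ (Ici 0))
    (hφ0 : φ 0 = 0) (hφ1 : φ 1 = 1) (hφtop : Tendsto φ atTop atTop)
    (hφconv : ConvexOn ℝ (Ici 0) φ)
    (Ω Ω₁ : Set (EuclideanSpace ℝ (Fin n)))
    (hΩ : IsConvexDomain n Ω) (hΩ₁ : IsConvexDomain n Ω₁)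
    (μp : Measure (Metric.sphere (0 : EuclideanSpace ℝ (Fin n)) 1)) [IsFiniteMeasure μp]
    (Cp Cp1 : ℝ) (hCp : 0 < Cp) (hCp1 : 0 < Cp1)
    (hPoincare : (p - 1) / ((n : ℝ) - p) * ∫ u, suppFn n Ω ↑u ∂μp = Cp)
    (hMinkowski : (p - 1) / ((n : ℝ) - p) * ∫ u, suppFn n Ω₁ ↑u ∂μp
      ≥ Cp ^ (((n : ℝ) - p - 1) / ((n : ℝ) - p)) * Cp1 ^ (1 / ((n : ℝ) - p))) :
    ∀ η : ℝ, 0 < η →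
      (p - 1) / ((n : ℝ) - p) *
          ∫ u, φ (suppFn n Ω₁ ↑u / (η * suppFn n Ω ↑u)) * suppFn n Ω ↑u ∂μp = Cp →
      (Cp1 / Cp) ^ (1 / ((n : ℝ) - p)) ≤ η := by
  intro η hη hint
  have hnp : (0:ℝ) < (n:ℝ) - p := by linarith
  have hk : (0:ℝ) < (p - 1) / ((n:ℝ) - p) := div_pos (by linarith) hnp
  set k := (p - 1) / ((n:ℝ) - p) with hkdef
  -- sphere norms
  have hnorm : ∀ u : Metric.sphere (0 : EuclideanSpace ℝ (Fin n)) 1, ‖(u : EuclideanSpace ℝ (Fin n))‖ = 1 := by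
    intro u
    have := u.2
    simpa [Metric.mem_sphere, dist_zero_right] using this
  have hpos : ∀ u : Metric.sphere (0 : EuclideanSpace ℝ (Fin n)) 1, 0 < suppFn n Ω u :=
    fun u => suppFn_pos n Ω hΩ u (hnorm u)
  have hpos1 : ∀ u : Metric.sphere (0 : EuclideanSpace ℝ (Fin n)) 1, 0 ≤ suppFn n Ω₁ u :=
    fun u => suppFn_nonneg n Ω₁ hΩ₁.2.2.1 hΩ₁.2.2.2 u (hnorm u)
  -- integrability
  have hIntΩ : Integrable (fun u : Metric.sphere (0 : EuclideanSpace ℝ (Fin n)) 1 => suppFn n Ω (u : EuclideanSpace ℝ (Fin n))) μp := by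
    by_contra h
    rw [integral_undef h, mul_zero] at hPoincare
    linarith
  have hIntΩ1 : Integrable (fun u : Metric.sphere (0 : EuclideanSpace ℝ (Fin n)) 1 => suppFn n Ω₁ (u : EuclideanSpace ℝ (Fin n))) μp := by
    by_contra h
    rw [integral_undef h, mul_zero] at hMinkowski
    have hprod : 0 < Cp ^ (((n : ℝ) - p - 1) / ((n : ℝ) - p)) * Cp1 ^ (1 / ((n : ℝ) - p)) :=
      mul_pos (Real.rpow_pos_of_pos hCp _) (Real.rpow_pos_of_pos hCp1 _)
    linarith
  have hIntφ : Integrable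
      (fun u : Metric.sphere (0 : EuclideanSpace ℝ (Fin n)) 1 => φ (suppFn n Ω₁ (u : EuclideanSpace ℝ (Fin n)) / (η * suppFn n Ω u)) * suppFn n Ω u) μp := by
    by_contra h
    rw [integral_undef h, mul_zero] at hint
    linarith
  -- support line
  obtain ⟨c, hc1, hcline⟩ := support_line_at_one φ hφ0 hφ1 hφconv
  have hcpos : 0 < c := lt_of_lt_of_le one_pos hc1
  -- pointwise bound
  have hpt : ∀ u : Metric.sphere (0 : EuclideanSpace ℝ (Fin n)) 1,
      (1 - c) * suppFn n Ω u + (c / η) * suppFn n Ω₁ u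
        ≤ φ (suppFn n Ω₁ (u : EuclideanSpace ℝ (Fin n)) / (η * suppFn n Ω u)) * suppFn n Ω u := by
    intro u
    have hΩu := hpos u
    have hΩ1u := hpos1 u
    set t := suppFn n Ω₁ (u : EuclideanSpace ℝ (Fin n)) / (η * suppFn n Ω u) with htdef
    have htnn : 0 ≤ t := div_nonneg hΩ1u (le_of_lt (mul_pos hη hΩu))
    have hline := hcline t htnn
    have h2 : (1 + c * (t - 1)) * suppFn n Ω u ≤ φ t * suppFn n Ω u :=
      mul_le_mul_of_nonneg_right hline (le_of_lt hΩu)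
    have heq : (1 + c * (t - 1)) * suppFn n Ω u
        = (1 - c) * suppFn n Ω u + (c / η) * suppFn n Ω₁ u := by
      rw [htdef]
      field_simp
      ring
    linarith [h2, heq ▸ h2]
  -- integrate
  set I := ∫ u, suppFn n Ω (u : EuclideanSpace ℝ (Fin n)) ∂μp with hI
  set I1 := ∫ u, suppFn n Ω₁ (u : EuclideanSpace ℝ (Fin n)) ∂μp with hI1
  set J := ∫ u, φ (suppFn n Ω₁ (u : EuclideanSpace ℝ (Fin n)) / (η * suppFn n Ω u)) * suppFn n Ω u ∂μp with hJ
  have hIntLHS : Integrable (fun u : Metric.sphere (0 : EuclideanSpace ℝ (Fin n)) 1 => (1 - c) * suppFn n Ω (u : EuclideanSpace ℝ (Fin n))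
      + (c / η) * suppFn n Ω₁ u) μp := (hIntΩ.const_mul _).add (hIntΩ1.const_mul _)
  have hmono : ∫ u, ((1 - c) * suppFn n Ω (u : EuclideanSpace ℝ (Fin n))
      + (c / η) * suppFn n Ω₁ u) ∂μp ≤ J :=
    integral_mono hIntLHS hIntφ hpt
  have hsplit : ∫ u, ((1 - c) * suppFn n Ω (u : EuclideanSpace ℝ (Fin n))
      + (c / η) * suppFn n Ω₁ u) ∂μp = (1 - c) * I + (c / η) * I1 := by
    rw [integral_add (hIntΩ.const_mul _) (hIntΩ1.const_mul _),
      integral_const_mul, integral_const_mul]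
  rw [hsplit] at hmono
  -- combine with capacity relations
  have hkJ : k * J = Cp := hint
  have hkI : k * I = Cp := hPoincare
  have hkI1 : Cp ^ (((n : ℝ) - p - 1) / ((n : ℝ) - p)) * Cp1 ^ (1 / ((n : ℝ) - p)) ≤ k * I1 :=
    hMinkowski
  -- derive k * I1 ≤ η * Cp
  have hkey : k * I1 ≤ η * Cp := by
    have h3 : k * ((1 - c) * I + (c / η) * I1) ≤ k * J :=
      mul_le_mul_of_nonneg_left hmono (le_of_lt hk)
    have h4 : (1 - c) * (k * I) + (c / η) * (k * I1) ≤ Cp := by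
      rw [hkJ] at h3; linarith [h3, mul_add k ((1-c)*I) ((c/η)*I1)]
    rw [hkI] at h4
    have h5 : (c / η) * (k * I1) ≤ c * Cp := by linarith
    have h6 : c * (k * I1) ≤ c * (η * Cp) := by
      have := mul_le_mul_of_nonneg_left h5 (le_of_lt hη)
      calc c * (k * I1) = η * ((c / η) * (k * I1)) := by field_simp
        _ ≤ η * (c * Cp) := mul_le_mul_of_nonneg_left h5 (le_of_lt hη)
        _ = c * (η * Cp) := by ring
    exact le_of_mul_le_mul_left h6 hcpos
  -- conclude
  set b := 1 / ((n:ℝ) - p) with hb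
  have hab : ((n : ℝ) - p - 1) / ((n : ℝ) - p) = 1 - b := by
    rw [hb]; field_simp
  have hCpa : Cp ^ (((n : ℝ) - p - 1) / ((n : ℝ) - p)) = Cp / Cp ^ b := by
    rw [hab, Real.rpow_sub hCp, Real.rpow_one]
  have hfinal : Cp / Cp ^ b * Cp1 ^ b ≤ η * Cp := by
    rw [← hCpa]; exact le_trans hkI1 hkey
  have hCpb : 0 < Cp ^ b := Real.rpow_pos_of_pos hCp _
  rw [Real.div_rpow (le_of_lt hCp1) (le_of_lt hCp)]
  rw [div_le_iff₀ hCpb]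
  -- from hfinal : Cp * Cp1^b / Cp^b ≤ η * Cp
  have : Cp * (Cp1 ^ b) ≤ η * Cp ^ b * Cp := by
    have h7 : Cp / Cp ^ b * Cp1 ^ b * Cp ^ b ≤ η * Cp * Cp ^ b :=
      mul_le_mul_of_nonneg_right hfinal (le_of_lt hCpb)
    calc Cp * Cp1 ^ b = Cp / Cp ^ b * Cp1 ^ b * Cp ^ b := by field_simp
      _ ≤ η * Cp * Cp ^ b := h7
      _ = η * Cp ^ b * Cp := by ring
    
  exact le_of_mul_le_mul_left (by linarith [this]) hCp
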